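/- Let g be an entire function with g([-1,1]) ⊆ [-1,1] and λ(g) ≤ 1, and for n ≥ 1 define g_n(z) := g^{<n>}(z/2^{n-1}). Then the sequence (g_n)_{n≥1} verifies the E(1) property: there exists τ > 0 such that for every A ∈ (0,τ] there is an integer M(A) with g_n([-1,1]_{1,A,p+1}) ⊆ [-1,1]_{1,A,p} for all p ≥ M(A) and all n ≥ 1. -/

import Mathlib

open Metric Set Filter

noncomputable section

/-- The segment `[-1,1]` viewed inside `ℂ`. -/
def seg : Set ℂ := (fun x : ℝ => (x : ℂ)) '' Set.Icc (-1) 1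

/-- The neighborhood `[-1,1]_r` of the segment. -/
def nbd (r : ℝ) : Set ℂ := {z : ℂ | Metric.infDist z seg < r}

/-- The set `[-1,1]_{k,A,n}`. -/
def tube (k A : ℝ) (n : ℕ) : Set ℂ :=
  {z : ℂ | Metric.infDist z seg < A * (n : ℝ) ^ (-(1 : ℝ) / k)}

/-- Sup norm of `f` on `S`. -/
def supOn (f : ℂ → ℂ) (S : Set ℂ) : ℝ := sSup ((fun z => ‖f z‖) '' S)

/-- The Gevrey class `G_k([-1,1])`. -/
def GevreyClass (k : ℝ) (f : ℝ → ℂ) : Prop :=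
  ContDiffOn ℝ (⊤ : ℕ∞) f (Set.Icc (-1) 1) ∧
  ∃ C > 0, ∃ A > 0, ∀ n : ℕ, ∀ x ∈ Set.Icc (-1 : ℝ) 1,
    ‖iteratedDerivWithin n f (Set.Icc (-1 : ℝ) 1) x‖ ≤
      C * A ^ n * (n : ℝ) ^ ((n : ℝ) * (1 + 1 / k))

/-- `(f_n)_{n ≥ 1}` is a `k`-sequence. -/
def IsKSeq (k : ℝ) (f : ℕ → ℂ → ℂ) : Prop :=
  ∃ B > 0, ∃ C > 0, ∃ θ ∈ Set.Ioo (0 : ℝ) 1, ∀ n : ℕ, 1 ≤ n →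
    DifferentiableOn ℂ (f n) (tube k B n) ∧ ∀ z ∈ tube k B n, ‖f n z‖ ≤ C * θ ^ n

/-- The `E(k)` property with threshold `τ` for a sequence of functions on `[-1,1]_σ`. -/
def EPropWith (k σ : ℝ) (φ : ℕ → ℂ → ℂ) (τ : ℝ) : Prop :=
  0 < τ ∧ τ ≤ σ ∧ ∀ A : ℝ, 0 < A → A ≤ τ → ∃ M : ℕ, ∀ n : ℕ, M ≤ n → ∀ p : ℕ,
    ∀ z ∈ tube k A (n + 1), φ p z ∈ tube k A n

/-- The `E(k)` property. -/
def EProp (k σ : ℝ) (φ : ℕ → ℂ → ℂ) : Prop := ∃ τ : ℝ, EPropWith k σ φ τ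

/-- `T` is a linear operator on functions. -/
def IsLinOp (T : (ℂ → ℂ) → ℂ → ℂ) : Prop :=
  (∀ f g : ℂ → ℂ, T (f + g) = T f + T g) ∧ ∀ (c : ℂ) (f : ℂ → ℂ), T (c • f) = c • T f

/-- The quantitative part of the `A(k)` property, for a given `A` and integer `N = N(A)`. -/
def APropAt (k : ℝ) (T : (ℂ → ℂ) → ℂ → ℂ) (ρ A : ℝ) (N : ℕ) : Prop :=
  ∀ n : ℕ, N ≤ n → ∀ f : ℂ → ℂ, DifferentiableOn ℂ f (tube k A n) →
    BddAbove ((fun z => ‖f z‖) '' tube k A n) →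
    DifferentiableOn ℂ (T f) (tube k A (n + 1)) ∧
      ∀ z ∈ tube k A (n + 1), ‖T f z‖ ≤ ρ * supOn f (tube k A n)

/-- The `A(k)` property with `k`-threshold `τ` and contraction constant `ρ`. -/
def AProp (k : ℝ) (T : (ℂ → ℂ) → ℂ → ℂ) (τ ρ : ℝ) : Prop :=
  0 < τ ∧ ρ ∈ Set.Ioo (0 : ℝ) 1 ∧
  (∀ A : ℝ, 0 < A → A ≤ τ → ∃ N : ℕ, APropAt k T ρ A N) ∧
  (∀ f : ℂ → ℂ, (∃ r > 0, DifferentiableOn ℂ f (nbd r)) →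
      ∀ z ∈ seg, ‖T f z‖ ≤ ρ * supOn f seg)
lemma seg_compact : IsCompact seg :=
  isCompact_Icc.image Complex.continuous_ofReal

lemma seg_nonempty : seg.Nonempty := ⟨(1 : ℂ), ⟨1, by norm_num, rfl⟩⟩

/-- One-step estimate: if `λ(g) ≤ 1`, a point at distance `d < 1` from the segment
is mapped to a point at distance at most `d / (1 - d)`. -/
lemma step_est (g : ℂ → ℂ) (hg : Differentiable ℂ g)
    (hgseg : ∀ z ∈ seg, g z ∈ seg)
    (hglam : ∀ n : ℕ, 1 ≤ n → ∀ z ∈ seg, ‖iteratedDeriv n g z‖ ≤ (n.factorial : ℝ))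
    {z : ℂ} (hz : Metric.infDist z seg < 1) :
    Metric.infDist (g z) seg ≤ Metric.infDist z seg / (1 - Metric.infDist z seg) := by
  obtain ⟨w, hw, hdw⟩ := seg_compact.exists_infDist_eq_dist seg_nonempty z
  set d : ℝ := Metric.infDist z seg with hd
  have hd0 : 0 ≤ d := Metric.infDist_nonneg
  have hd1 : d < 1 := hz
  set f : ℕ → ℂ := fun n => ((n.factorial : ℂ))⁻¹ • (z - w) ^ n • iteratedDeriv n g w with hf
  have hs : HasSum f (g z) := Complex.hasSum_taylorSeries_of_entire hg w z
  have hf0 : f 0 = g w := by simp [hf]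
  have hs1 : HasSum (fun n : ℕ => f (n + 1)) (g z - g w) := by
    rw [hasSum_nat_add_iff 1]
    simpa [Finset.sum_range_one, hf0] using hs
  have hzw : ‖z - w‖ = d := by rw [hdw, dist_eq_norm]
  have hb : ∀ n : ℕ, ‖f (n + 1)‖ ≤ d * d ^ n := by
    intro n
    have h1 : ‖iteratedDeriv (n + 1) g w‖ ≤ ((n + 1).factorial : ℝ) :=
      hglam (n + 1) (by omega) w hw
    have hFpos : (0 : ℝ) < ((n + 1).factorial : ℝ) := by positivity
    have : ‖f (n + 1)‖ = (((n + 1).factorial : ℝ))⁻¹ * (d ^ (n + 1) * ‖iteratedDeriv (n + 1) g w‖) := by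
      rw [hf]
      simp only [norm_smul, norm_inv, norm_pow, hzw]
      rw [Complex.norm_natCast]
    rw [this]
    have h2 : d ^ (n + 1) * ‖iteratedDeriv (n + 1) g w‖ ≤ d ^ (n + 1) * ((n + 1).factorial : ℝ) := by
      apply mul_le_mul_of_nonneg_left h1 (by positivity)
    calc (((n + 1).factorial : ℝ))⁻¹ * (d ^ (n + 1) * ‖iteratedDeriv (n + 1) g w‖)
        ≤ (((n + 1).factorial : ℝ))⁻¹ * (d ^ (n + 1) * ((n + 1).factorial : ℝ)) := by
          apply mul_le_mul_of_nonneg_left h2 (by positivity)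
      _ = d ^ (n + 1) := by field_simp
      _ = d * d ^ n := by ring
  have hgeo : HasSum (fun n : ℕ => d * d ^ n) (d * (1 - d)⁻¹) :=
    (hasSum_geometric_of_lt_one hd0 hd1).mul_left d
  have hnorm : ‖g z - g w‖ ≤ d * (1 - d)⁻¹ := by
    have := tsum_of_norm_bounded hgeo hb
    rwa [hs1.tsum_eq] at this
  calc Metric.infDist (g z) seg ≤ dist (g z) (g w) :=
        Metric.infDist_le_dist_of_mem (hgseg w hw)
    _ = ‖g z - g w‖ := dist_eq_norm _ _
    _ ≤ d * (1 - d)⁻¹ := hnorm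
    _ = d / (1 - d) := by rw [div_eq_mul_inv]

lemma scale_est {z : ℂ} {c : ℝ} (hc : 1 ≤ c) :
    Metric.infDist (z / (c : ℂ)) seg ≤ Metric.infDist z seg / c := by
  have hc0 : (0 : ℝ) < c := lt_of_lt_of_le one_pos hc
  obtain ⟨w, hw, hdw⟩ := seg_compact.exists_infDist_eq_dist seg_nonempty z
  obtain ⟨x, hx, rfl⟩ := hw
  have hxc : (x / c : ℝ) ∈ Set.Icc (-1 : ℝ) 1 := by
    constructor
    · rw [le_div_iff₀ hc0]; nlinarith [hx.1, hx.2]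
    · rw [div_le_one hc0]; nlinarith [hx.1, hx.2]
  have hmem : ((x / c : ℝ) : ℂ) ∈ seg := ⟨x / c, hxc, rfl⟩
  calc Metric.infDist (z / (c : ℂ)) seg ≤ dist (z / (c : ℂ)) ((x / c : ℝ) : ℂ) :=
        Metric.infDist_le_dist_of_mem hmem
    _ = ‖z - (x : ℂ)‖ / c := by
        rw [dist_eq_norm]
        push_cast
        rw [div_sub_div_same, norm_div]
        simp [Complex.norm_real, abs_of_pos hc0]
    _ = Metric.infDist z seg / c := by rw [hdw, dist_eq_norm]

lemma iter_est (g : ℂ → ℂ) (hg : Differentiable ℂ g)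
    (hgseg : ∀ z ∈ seg, g z ∈ seg)
    (hglam : ∀ n : ℕ, 1 ≤ n → ∀ z ∈ seg, ‖iteratedDeriv n g z‖ ≤ (n.factorial : ℝ)) :
    ∀ n : ℕ, ∀ z : ℂ, ∀ δ : ℝ, Metric.infDist z seg ≤ δ → (n : ℝ) * δ < 1 →
      Metric.infDist (g^[n] z) seg ≤ δ / (1 - (n : ℝ) * δ) := by
  intro n
  induction n with
  | zero => intro z δ h1 _; simpa using h1
  | succ n ih =>
    intro z δ h1 h2
    have hδ0 : 0 ≤ δ := le_trans Metric.infDist_nonneg h1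
    have hn2 : (n : ℝ) * δ < 1 := by
      have : (n : ℝ) * δ ≤ ((n : ℕ) + 1 : ℝ) * δ := by nlinarith
      push_cast at h2 ⊢
      nlinarith
    have hdn := ih z δ h1 hn2
    set e : ℝ := δ / (1 - (n : ℝ) * δ) with he
    have hs : (0 : ℝ) < 1 - (n : ℝ) * δ := by linarith
    have he1 : e < 1 := by
      rw [he, div_lt_one hs]
      push_cast at h2
      nlinarith
    have hdn1 : Metric.infDist (g^[n] z) seg < 1 := lt_of_le_of_lt hdn he1
    rw [Function.iterate_succ_apply']
    have hstep := step_est g hg hgseg hglam hdn1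
    set d : ℝ := Metric.infDist (g^[n] z) seg with hdd
    have hd0 : 0 ≤ d := Metric.infDist_nonneg
    have hmono : d / (1 - d) ≤ e / (1 - e) := by
      rw [div_le_div_iff₀ (by linarith) (by linarith)]
      nlinarith
    have heq : e / (1 - e) = δ / (1 - ((n : ℕ) + 1 : ℝ) * δ) := by
      have hs2 : (0 : ℝ) < 1 - ((n : ℕ) + 1 : ℝ) * δ := by push_cast at h2 ⊢; nlinarith
      rw [div_eq_div_iff (by linarith : (0:ℝ) < 1 - e).ne' hs2.ne', he]
      have hx : δ / (1 - (n : ℝ) * δ) * (1 - (n : ℝ) * δ) = δ := div_mul_cancel₀ _ hs.ne'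
      linear_combination hx
      try tauto
    calc Metric.infDist (g (g^[n] z)) seg ≤ d / (1 - d) := hstep
      _ ≤ e / (1 - e) := hmono
      _ = δ / (1 - ((n : ℕ) + 1 : ℝ) * δ) := heq
      _ = δ / (1 - ((n + 1 : ℕ) : ℝ) * δ) := by push_cast; ring_nf

/-- for `g` entire with `g([-1,1]) ⊆ [-1,1]` and `λ(g) ≤ 1`, the
sequence `g_n(z) = g^{<n>}(z / 2^(n-1))` verifies the `E(1)` property. -/
theorem iterates_E1 (g : ℂ → ℂ) (hg : Differentiable ℂ g)
    (hgseg : ∀ z ∈ seg, g z ∈ seg)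
    (hglam : ∀ n : ℕ, 1 ≤ n → ∀ z ∈ seg, ‖iteratedDeriv n g z‖ ≤ (n.factorial : ℝ)) :
    ∃ τ : ℝ, 0 < τ ∧ ∀ A : ℝ, 0 < A → A ≤ τ → ∃ M : ℕ, ∀ p : ℕ, M ≤ p →
      ∀ n : ℕ, 1 ≤ n → ∀ z ∈ tube 1 A (p + 1),
        g^[n] (z / 2 ^ (n - 1)) ∈ tube 1 A p := by
  refine ⟨1/4, by norm_num, ?_⟩
  intro A hA hA4
  refine ⟨1, ?_⟩
  intro p hp n hn z hz
  have hrp : ∀ m : ℕ, ((m : ℝ)) ^ (-(1 : ℝ) / 1) = ((m : ℝ))⁻¹ := by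
    intro m
    rw [neg_div, div_one, Real.rpow_neg (Nat.cast_nonneg m), Real.rpow_one]
  have hpR : (1 : ℝ) ≤ (p : ℝ) := by exact_mod_cast hp
  have hp0 : (0 : ℝ) < (p : ℝ) := by linarith
  simp only [tube, Set.mem_setOf_eq, hrp] at hz ⊢
  set d : ℝ := Metric.infDist z seg with hd
  have hd0 : 0 ≤ d := Metric.infDist_nonneg
  have hdD : d * ((p : ℝ) + 1) < A := by
    have hcast : ((p + 1 : ℕ) : ℝ) = (p : ℝ) + 1 := by push_cast; ring
    rw [hcast] at hz
    have hpp : (0 : ℝ) < (p : ℝ) + 1 := by linarith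
    calc d * ((p : ℝ) + 1) < A * ((p : ℝ) + 1)⁻¹ * ((p : ℝ) + 1) := by
          exact mul_lt_mul_of_pos_right hz hpp
      _ = A := by field_simp
  -- small numeric facts
  have hdq : d < 1 / 8 := by nlinarith
  -- scaling
  set c : ℝ := (2 : ℝ) ^ (n - 1) with hc
  have hc1 : (1 : ℝ) ≤ c := one_le_pow₀ (by norm_num)
  have hc0 : (0 : ℝ) < c := lt_of_lt_of_le one_pos hc1
  have hcast2 : ((c : ℝ) : ℂ) = (2 : ℂ) ^ (n - 1) := by rw [hc]; push_cast; ring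
  have hscale : Metric.infDist (z / 2 ^ (n - 1)) seg ≤ d / c := by
    rw [← hcast2]; exact scale_est hc1
  set δ : ℝ := d / c with hδ
  have hδ0 : 0 ≤ δ := by positivity
  have hδd : δ ≤ d := by
    rw [hδ, div_le_iff₀ hc0]; nlinarith
  have hnc : (n : ℝ) ≤ 2 * c := by
    have h1 : n < 2 ^ n := Nat.lt_two_pow_self (n := n)
    have h2 : (2 : ℝ) ^ n = 2 * c := by
      rw [hc, ← pow_succ']
      congr 1
      omega
    have : (n : ℝ) < (2 : ℝ) ^ n := by exact_mod_cast h1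
    linarith
  have hnδ : (n : ℝ) * δ ≤ 2 * d := by
    rw [hδ]
    calc (n : ℝ) * (d / c) ≤ 2 * c * (d / c) := by
          apply mul_le_mul_of_nonneg_right hnc (by positivity)
      _ = 2 * d := by field_simp
  have h2d : 2 * d < 1 / 4 := by linarith
  have hiter := iter_est g hg hgseg hglam n (z / 2 ^ (n - 1)) δ hscale (by nlinarith)
  have h1 : δ / (1 - (n : ℝ) * δ) ≤ d / (1 - 2 * d) :=
    div_le_div₀ hd0 hδd (by linarith) (by linarith)
  have h2 : d / (1 - 2 * d) < A * ((p : ℝ))⁻¹ := by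
    rw [← div_eq_mul_inv, div_lt_div_iff₀ (by linarith) hp0]
    nlinarith [mul_nonneg hd0 (by linarith : (0 : ℝ) ≤ 1 - 2 * A)]
  calc Metric.infDist (g^[n] (z / 2 ^ (n - 1))) seg ≤ δ / (1 - (n : ℝ) * δ) := hiter
    _ ≤ d / (1 - 2 * d) := h1
    _ < A * ((p : ℝ))⁻¹ := h2
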